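/- The associator α_{A,B,C} : (A ∧ B) ∧ C ≃⋆ A ∧ (B ∧ C) is natural in all three arguments: for pointed maps f : A →⋆ A', g : B →⋆ B', h : C →⋆ C', one has (f ∧ (g ∧ h)) ∘ α_{A,B,C} = α_{A',B',C'} ∘ ((f ∧ g) ∧ h) as pointed maps. -/

import Mathlib

universe u

namespace SmashPaper

/-- Relation generating the wedge `A ∨ B` as a quotient of `A ⊕ B`. -/
inductive WedgeRel (A B : Pointed.{u}) : (A ⊕ B) → (A ⊕ B) → Prop
  | glue : WedgeRel A B (Sum.inl A.point) (Sum.inr B.point)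

/-- The wedge sum `A ∨ B` of pointed types. -/
def Wedge (A B : Pointed.{u}) : Type u := Quot (WedgeRel A B)

/-- The inclusion `A ∨ B → A × B`. -/
def wedgeIncl (A B : Pointed.{u}) : Wedge A B → A × B :=
  Quot.lift (Sum.elim (fun a => (a, B.point)) (fun b => (A.point, b)))
    (by rintro _ _ ⟨⟩; rfl)

/-- The relation generating the cofibre of a map `f : W → P`. -/
inductive CofiberRel {W P : Type u} (f : W → P) : (P ⊕ PUnit) → (P ⊕ PUnit) → Prop
  | glue (w : W) : CofiberRel f (Sum.inl (f w)) (Sum.inr PUnit.unit)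

/-- The cofibre (mapping cone) of `f`, i.e. the pushout of `1 ← W → P`. -/
def Cofiber {W P : Type u} (f : W → P) : Type u := Quot (CofiberRel f)

/-- The cofibre point. -/
def Cofiber.base {W P : Type u} (f : W → P) : Cofiber f := Quot.mk _ (Sum.inr PUnit.unit)

/-- The inclusion of `P` into the cofibre of `f : W → P`. -/
def Cofiber.incl {W P : Type u} (f : W → P) (p : P) : Cofiber f := Quot.mk _ (Sum.inl p)

/-- The smash product `A ∧ B`: the cofibre of the inclusion `A ∨ B → A × B`. -/
def Smash (A B : Pointed.{u}) : Type u := Cofiber (wedgeIncl A B)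

/-- The point constructor `⟨a, b⟩` of `A ∧ B`. -/
def Smash.mk {A B : Pointed.{u}} (a : A) (b : B) : Smash A B :=
  Quot.mk _ (Sum.inl (a, b))

/-- The basepoint `⋆∧` of `A ∧ B`. -/
def Smash.pt {A B : Pointed.{u}} : Smash A B := Quot.mk _ (Sum.inr PUnit.unit)

/-- `A ∧ B` as a pointed type. -/
def pSmash (A B : Pointed.{u}) : Pointed.{u} := ⟨Smash A B, Smash.pt⟩

theorem Smash.pushl {A B : Pointed.{u}} (a : A) :
    Smash.mk a B.point = (Smash.pt : Smash A B) :=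
  Quot.sound (CofiberRel.glue (Quot.mk _ (Sum.inl a)))

theorem Smash.pushr {A B : Pointed.{u}} (b : B) :
    Smash.mk A.point b = (Smash.pt : Smash A B) :=
  Quot.sound (CofiberRel.glue (Quot.mk _ (Sum.inr b)))

/-- Functorial action of the smash product on pointed maps. -/
def smashMap {A B C D : Pointed.{u}} (f : Pointed.Hom A C) (g : Pointed.Hom B D) :
    Pointed.Hom (pSmash A B) (pSmash C D) where
  toFun := Quot.lift
    (Sum.elim (fun p => Smash.mk (f.toFun p.1) (g.toFun p.2)) (fun _ => Smash.pt))
    (by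
      rintro _ _ ⟨w⟩
      induction w using Quot.ind with
      | mk x =>
        rcases x with a | b
        · show Smash.mk (f.toFun a) (g.toFun B.point) = Smash.pt
          rw [g.map_point]; exact Smash.pushl _
        · show Smash.mk (f.toFun A.point) (g.toFun b) = Smash.pt
          rw [f.map_point]; exact Smash.pushr _)
  map_point := rfl

/-- The braiding `β : A ∧ B → B ∧ A` induced by the swap map on products. -/
def braidHom (A B : Pointed.{u}) : Pointed.Hom (pSmash A B) (pSmash B A) where
  toFun := Quot.lift
    (Sum.elim (fun p => Smash.mk p.2 p.1) (fun _ => Smash.pt))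
    (by
      rintro _ _ ⟨w⟩
      induction w using Quot.ind with
      | mk x =>
        rcases x with a | b
        · exact Smash.pushr a
        · exact Smash.pushl b)
  map_point := rfl

/-- Auxiliary map for the associator. -/
def assocAux {A B C : Pointed.{u}} (x : Smash A B) (c : C) : Smash A (pSmash B C) :=
  Quot.lift
    (Sum.elim (fun p => Smash.mk (B := pSmash B C) p.1 (Smash.mk p.2 c)) (fun _ => Smash.pt))
    (by
      rintro _ _ ⟨w⟩
      induction w using Quot.ind with
      | mk y =>
        rcases y with a | b
        · show Smash.mk (B := pSmash B C) a (Smash.mk B.point c) = Smash.pt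
          rw [Smash.pushr]; exact Smash.pushl a
        · exact Smash.pushr _) x

/-- The associator `α : (A ∧ B) ∧ C → A ∧ (B ∧ C)`. -/
def assocHom (A B C : Pointed.{u}) :
    Pointed.Hom (pSmash (pSmash A B) C) (pSmash A (pSmash B C)) where
  toFun := Quot.lift
    (Sum.elim (fun p => assocAux p.1 p.2) (fun _ => Smash.pt))
    (by
      rintro _ _ ⟨w⟩
      induction w using Quot.ind with
      | mk y =>
        rcases y with x | c
        · show assocAux x C.point = Smash.pt
          induction x using Quot.ind with
          | mk z =>
            rcases z with p | u
            · show Smash.mk (B := pSmash B C) p.1 (Smash.mk p.2 C.point) = Smash.pt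
              rw [Smash.pushl]; exact Smash.pushl p.1
            · rfl
        · rfl)
  map_point := rfl

theorem assocHom_mk {A B C : Pointed.{u}} (a : A) (b : B) (c : C) :
    (assocHom A B C).toFun (Smash.mk (Smash.mk a b) c) = Smash.mk (B := pSmash B C) a (Smash.mk b c) :=
  rfl

/-- Pointed equivalences. -/
structure PtdEquiv (A B : Pointed.{u}) where
  toEquiv : A ≃ B
  map_point : toEquiv A.point = B.point

/-- The pointed booleans `𝟚`, the unit for the smash product. -/
def pBool : Pointed.{0} := ⟨Bool, true⟩


theorem comp_toFun {A B C : Pointed.{u}} (f : Pointed.Hom A B) (g : Pointed.Hom B C)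
    (x : A) : (f.comp g).toFun x = g.toFun (f.toFun x) := rfl

theorem smashMap_mk {A B C D : Pointed.{u}} (f : Pointed.Hom A C) (g : Pointed.Hom B D)
    (a : A) (b : B) : (smashMap f g).toFun (Smash.mk a b) = Smash.mk (f.toFun a) (g.toFun b) := rfl

theorem smashMap_pt {A B C D : Pointed.{u}} (f : Pointed.Hom A C) (g : Pointed.Hom B D) :
    (smashMap f g).toFun Smash.pt = Smash.pt := rfl

theorem assocHom_pt {A B C : Pointed.{u}} :
    (assocHom A B C).toFun Smash.pt = Smash.pt := rfl

theorem assocHom_ptl {A B C : Pointed.{u}} (c : C) :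
    (assocHom A B C).toFun (Smash.mk (Smash.pt : Smash A B) c) = Smash.pt := rfl

/-- naturality of the associator in all three arguments. -/
theorem smash_assoc_natural (A B C A' B' C' : Pointed.{u})
    (f : Pointed.Hom A A') (g : Pointed.Hom B B') (h : Pointed.Hom C C') :
    (assocHom A B C).comp (smashMap f (smashMap g h))
      = (smashMap (smashMap f g) h).comp (assocHom A' B' C') := by
  have : ((assocHom A B C).comp (smashMap f (smashMap g h))).toFun
      = ((smashMap (smashMap f g) h).comp (assocHom A' B' C')).toFun := by
    funext x
    induction x using Quot.ind with
    | mk y =>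
      rcases y with ⟨x, c⟩ | u
      · induction x using Quot.ind with
        | mk z =>
          rcases z with ⟨a, b⟩ | u
          · show ((assocHom A B C).comp (smashMap f (smashMap g h))).toFun
                (Smash.mk (Smash.mk a b) c)
              = ((smashMap (smashMap f g) h).comp (assocHom A' B' C')).toFun
                (Smash.mk (Smash.mk a b) c)
            rfl
          · show ((assocHom A B C).comp (smashMap f (smashMap g h))).toFun
                (Smash.mk (Smash.pt) c)
              = ((smashMap (smashMap f g) h).comp (assocHom A' B' C')).toFun
                (Smash.mk (Smash.pt) c)
            rfl
      · show ((assocHom A B C).comp (smashMap f (smashMap g h))).toFun Smash.pt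
          = ((smashMap (smashMap f g) h).comp (assocHom A' B' C')).toFun Smash.pt
        rfl
  cases hα : (assocHom A B C).comp (smashMap f (smashMap g h))
  cases hβ : (smashMap (smashMap f g) h).comp (assocHom A' B' C')
  rw [hα, hβ] at this
  simp only at this
  subst this
  rfl

end SmashPaper
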